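/- If D is a λ⁺-excellent filter on an index set I, then D is λ⁺-good: every monotonic function f from finite subsets of λ into D has a multiplicative refinement. -/
import Mathlib


open scoped Classical

universe u v w

/-- Terms in the language of Boolean algebras, with variables from `V`. -/
inductive BTerm (V : Type v) : Type v where
  | var : V → BTerm V
  | bot : BTerm V
  | top : BTerm V
  | inf : BTerm V → BTerm V → BTerm V
  | sup : BTerm V → BTerm V → BTerm V
  | compl : BTerm V → BTerm V

/-- Evaluation of a Boolean term in a Boolean algebra, given values for the variables. -/
def BTerm.eval {V : Type v} {B : Type u} [BooleanAlgebra B] (f : V → B) : BTerm V → B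
  | .var v => f v
  | .bot => ⊥
  | .top => ⊤
  | .inf s t => s.eval f ⊓ t.eval f
  | .sup s t => s.eval f ⊔ t.eval f
  | .compl t => (t.eval f)ᶜ

/-- `σ ∈ Λ_{D, Ā↾u}`: the Boolean term `σ`, in variables indexed by the subsets of the
finite set `u`, vanishes modulo `D` (i.e. the complement of its value lies in `D`) on
every sequence obtained from `Ā↾𝒫(u)` by replacing the entries indexed by sets not
contained in some `w ⊆ u` by `∅`.  (Equivalently, `σ` vanishes in the quotient Boolean
algebra `𝒫(I)/D` on every member of `N(Ā↾𝒫(u))`.) -/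
def InLambda {ι : Type w} {I : Type u} (D : Filter I) (A : Finset ι → Set I)
    (u : Finset ι) (σ : BTerm {v : Finset ι // v ⊆ u}) : Prop :=
  ∀ w : Finset ι, w ⊆ u →
    (BTerm.eval (fun v => if v.1 ⊆ w then A v.1 else (∅ : Set I)) σ)ᶜ ∈ D

/-- A filter `D` on `I` is `λ⁺`-excellent if every `[λ]^{<ℵ₀}`-indexed sequence
`Ā` of subsets of `I` admits a refinement `B̄` with `B_u ⊆ A_u`, `B_u = A_u mod D`,
such that every distinguished Boolean term (member of `Λ_{D, Ā↾u}`) evaluates to the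
genuinely empty set on `B̄`. -/
def IsExcellent {I : Type u} (lam : Cardinal.{w}) (D : Filter I) : Prop :=
  ∀ A : Finset lam.out → Set I, ∃ B : Finset lam.out → Set I,
    (∀ u, B u ⊆ A u) ∧
    (∀ u, {t | t ∈ A u ↔ t ∈ B u} ∈ D) ∧
    ∀ (u : Finset lam.out) (σ : BTerm {v : Finset lam.out // v ⊆ u}),
      InLambda D A u σ → BTerm.eval (fun v => B v.1) σ = ∅

/-- A filter `D` on `I` is `λ⁺`-good if every monotonic `f : [λ]^{<ℵ₀} → D` has a
multiplicative refinement `g : [λ]^{<ℵ₀} → D`. -/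
def IsGood {I : Type u} (lam : Cardinal.{w}) (D : Filter I) : Prop :=
  ∀ f : Finset lam.out → Set I, (∀ u, f u ∈ D) → (∀ u v, u ⊆ v → f v ⊆ f u) →
    ∃ g : Finset lam.out → Set I, (∀ u, g u ∈ D) ∧ (∀ u, g u ⊆ f u) ∧
      ∀ u v, g u ∩ g v = g (u ∪ v)

/-- If `D` is a `λ⁺`-excellent filter on an index set `I`, then `D` is `λ⁺`-good. -/
theorem isGood_of_isExcellent {I : Type u} (lam : Cardinal.{w}) (D : Filter I)
    (h : IsExcellent lam D) : IsGood lam D := by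
  intro f hfD hfmono
  obtain ⟨B, hB1, hB2, hB3⟩ := h f
  have hmono : ∀ u w : Finset lam.out, w ⊆ u → B u ⊆ B w := by
    intro u w hw
    have hσ : InLambda D f u
        (BTerm.inf (BTerm.var ⟨u, subset_refl u⟩) (BTerm.compl (BTerm.var ⟨w, hw⟩))) := by
      intro w' hw'
      simp only [BTerm.eval]
      by_cases hu : u ⊆ w'
      · rw [if_pos hu, if_pos (hw.trans hu)]
        have : f u ⊓ (f w)ᶜ = (∅ : Set I) := by
          apply Set.eq_empty_of_forall_notMem
          rintro t ⟨ht1, ht2⟩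
          exact ht2 (hfmono w u hw ht1)
        rw [this]
        simpa using Filter.univ_mem
      · rw [if_neg hu]
        have : (∅ : Set I) ⊓ (if w ⊆ w' then f w else ∅)ᶜ = ∅ := by simp
        rw [this]
        simpa using Filter.univ_mem
    have := hB3 u _ hσ
    simp only [BTerm.eval] at this
    intro t ht
    by_contra htw
    exact absurd this (Set.Nonempty.ne_empty ⟨t, ht, htw⟩)
  refine ⟨B, ?_, hB1, ?_⟩
  · intro u
    have hsub : {t | t ∈ f u ↔ t ∈ B u} ∩ f u ⊆ B u := fun t ⟨ht1, ht2⟩ => ht1.mp ht2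
    exact D.mem_of_superset (Filter.inter_mem (hB2 u) (hfD u)) hsub
  · intro u v
    apply Set.Subset.antisymm
    · have hσ : InLambda D f (u ∪ v)
          (BTerm.inf (BTerm.inf (BTerm.var ⟨u, Finset.subset_union_left⟩)
            (BTerm.var ⟨v, Finset.subset_union_right⟩))
            (BTerm.compl (BTerm.var ⟨u ∪ v, subset_refl _⟩))) := by
        intro w' hw'
        simp only [BTerm.eval]
        by_cases hu : u ⊆ w'
        · by_cases hv : v ⊆ w'
          · have huv : u ∪ v ⊆ w' := Finset.union_subset hu hv
            rw [if_pos hu, if_pos hv, if_pos huv]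
            refine D.mem_of_superset (hfD (u ∪ v)) ?_
            intro t ht
            rintro ⟨-, ht2⟩
            exact ht2 ht
          · rw [if_neg hv]
            have : (if u ⊆ w' then f u else ∅) ⊓ (∅ : Set I) ⊓
                (if u ∪ v ⊆ w' then f (u ∪ v) else ∅)ᶜ = ∅ := by simp
            rw [this]
            simpa using Filter.univ_mem
        · rw [if_neg hu]
          have : (∅ : Set I) ⊓ (if v ⊆ w' then f v else ∅) ⊓
              (if u ∪ v ⊆ w' then f (u ∪ v) else ∅)ᶜ = ∅ := by simp
          rw [this]
          simpa using Filter.univ_mem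
      have := hB3 (u ∪ v) _ hσ
      simp only [BTerm.eval] at this
      rintro t ⟨ht1, ht2⟩
      by_contra htw
      exact absurd this (Set.Nonempty.ne_empty ⟨t, ⟨ht1, ht2⟩, htw⟩)
    · intro t ht
      exact ⟨hmono (u ∪ v) u Finset.subset_union_left ht,
        hmono (u ∪ v) v Finset.subset_union_right ht⟩
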